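/- Every sequence that is not normal is finite-state compressible: if α is not normal, there exists an automatic description mode R and ε > 0 such that K_R(a₀…a_{n−1}) ≤ (1−ε)·n for infinitely many n. -/

import Mathlib

/-- A finite automaton: a finite directed graph whose edges are labeled by pairs
of an optional input letter and an optional output letter (`none` = ε). -/
structure Automaton (A B : Type*) where
  n : ℕ
  edges : List (Fin n × (Option A × Option B) × Fin n)

namespace Automaton

/-- `Reads G s t u v` : along some directed path from `s` to `t` one reads the
pair of strings `(u, v)` (concatenating labels, ε contributing nothing). -/
inductive Reads {A B : Type*} (G : Automaton A B) :
    Fin G.n → Fin G.n → List A → List B → Prop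
  | nil (s : Fin G.n) : Reads G s s [] []
  | step {s t r : Fin G.n} {a : Option A} {b : Option B} {u : List A} {v : List B} :
      (s, (a, b), t) ∈ G.edges → Reads G t r u v →
      Reads G s r (a.toList ++ u) (b.toList ++ v)

/-- The relation realized by the automaton: pairs readable along some directed
path, with arbitrary start and end states. -/
def Rel {A B : Type*} (G : Automaton A B) (u : List A) (v : List B) : Prop :=
  ∃ s t : Fin G.n, G.Reads s t u v

end Automaton

/-- A relation is automatic if it is realized by some automaton. -/
def IsAutomatic {A B : Type*} (R : List A → List B → Prop) : Prop :=
  ∃ G : Automaton A B, ∀ u v, R u v ↔ G.Rel u v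

/-- `R` is O(1)-valued: some constant bounds the number of strings related to any `p`. -/
def BoundedValued {A B : Type*} (R : List A → List B → Prop) : Prop :=
  ∃ c : ℕ, ∀ p, {x | R p x}.Finite ∧ {x | R p x}.ncard ≤ c

/-- An automatic description mode: an O(1)-valued automatic relation on binary strings. -/
def IsDescriptionMode (R : List Bool → List Bool → Prop) : Prop :=
  IsAutomatic R ∧ BoundedValued R

/-- Automatic Kolmogorov complexity: minimal length of a description of `x`
(`⊤` if there is none). -/
noncomputable def autK (R : List Bool → List Bool → Prop) (x : List Bool) : ℕ∞ :=
  sInf {n : ℕ∞ | ∃ p : List Bool, R p x ∧ n = p.length}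

/-- Number of aligned `k`-blocks among the first `N` blocks of `α` equal to `r`. -/
def alignedCount (α : ℕ → Bool) (k : ℕ) (r : List Bool) (N : ℕ) : ℕ :=
  ((Finset.range N).filter (fun i => List.ofFn (fun j : Fin k => α (i * k + j)) = r)).card

/-- A binary sequence is normal: every `k`-bit string occurs among the aligned
`k`-bit blocks with limit frequency `2⁻ᵏ`, for every `k ≥ 1`. -/
def IsNormal (α : ℕ → Bool) : Prop :=
  ∀ k : ℕ, 1 ≤ k → ∀ r : List Bool, r.length = k →
    Filter.Tendsto (fun N => (alignedCount α k r N : ℝ) / (N : ℝ))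
      Filter.atTop (nhds ((2 : ℝ)⁻¹ ^ k))

/-- The length-`n` prefix of the sequence `α`. -/
def prefixOf (α : ℕ → Bool) (n : ℕ) : List Bool := List.ofFn fun i : Fin n => α i

namespace NNC

theorem reads_trans {A B : Type*} {G : Automaton A B} {x y z : Fin G.n}
    {u v u' v'} (h1 : G.Reads x y u v) (h2 : G.Reads y z u' v') :
    G.Reads x z (u ++ u') (v ++ v') := by
  induction h1 with
  | nil => simpa using h2
  | step hmem hsub ih =>
      rw [List.append_assoc, List.append_assoc]
      exact Automaton.Reads.step hmem (ih h2)

section Build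

variable (s L : ℕ) (enc : (Fin s → Bool) → List Bool)

def St : Type := (Σ l : Fin (L+1), Fin l → Bool) ⊕ ((Fin s → Bool) × Fin s)

instance : Fintype (St s L) := by unfold St; infer_instance
instance : DecidableEq (St s L) := by unfold St; infer_instance

def root : St s L := Sum.inl ⟨0, Fin.elim0⟩

instance : Nonempty (St s L) := ⟨root s L⟩

variable (hs : 0 < s)

noncomputable def dec (q : List Bool) : Option (Fin s → Bool) :=
  if h : ∃ V, enc V = q then some h.choose else none

lemma dec_eq_some {q V} (h : dec s enc q = some V) : enc V = q := by
  unfold dec at h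
  split at h
  · next hex => cases h; exact hex.choose_spec
  · exact absurd h (by simp)

variable (hpf : ∀ V V', enc V <+: enc V' → V = V')

include hpf in
lemma dec_enc (V) : dec s enc (enc V) = some V := by
  unfold dec
  have hex : ∃ V', enc V' = enc V := ⟨V, rfl⟩
  rw [dif_pos hex]
  have h1 : enc hex.choose = enc V := hex.choose_spec
  have : hex.choose = V := hpf _ _ (by rw [h1])
  rw [this]

noncomputable def trF : (Σ l : Fin (L+1), Fin l → Bool) → Bool → Option (St s L) :=
  fun x b =>
    match dec s enc (List.ofFn x.2 ++ [b]) with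
    | some V => some (Sum.inr (V, ⟨0, hs⟩))
    | none =>
        if h : (x.1 : ℕ) + 1 ≤ L then
          some (Sum.inl ⟨⟨(x.1 : ℕ) + 1, by omega⟩, Fin.snoc x.2 b⟩)
        else none

def epsF : ((Fin s → Bool) × Fin s) → Bool × St s L :=
  fun x => (x.1 x.2, if h : (x.2 : ℕ) + 1 < s then Sum.inr (x.1, ⟨(x.2 : ℕ)+1, h⟩) else root s L)

def rank : St s L → ℕ
  | Sum.inl _ => 0
  | Sum.inr x => s - (x.2 : ℕ)

def P : St s L → (Option Bool × Option Bool) → St s L → Prop :=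
  fun x lab y =>
    (∃ rs bb, x = Sum.inl rs ∧ lab = (some bb, none) ∧ trF s L enc hs rs bb = some y) ∨
    (∃ es, x = Sum.inr es ∧ lab = (none, some (epsF s L es).1) ∧ y = (epsF s L es).2)

noncomputable def e : St s L ≃ Fin (Fintype.card (St s L)) := Fintype.equivFin _

noncomputable def G : Automaton Bool Bool where
  n := Fintype.card (St s L)
  edges :=
    letI : DecidablePred (fun z : St s L × (Option Bool × Option Bool) × St s L =>
        P s L enc hs z.1 z.2.1 z.2.2) := fun _ => Classical.propDecidable _
    ((Finset.univ : Finset (St s L × (Option Bool × Option Bool) × St s L)).filter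
      (fun z => P s L enc hs z.1 z.2.1 z.2.2)).toList.map
      (fun z => (e s L z.1, z.2.1, e s L z.2.2))

lemma mem_edges {x y : Fin (G s L enc hs).n} {lab : Option Bool × Option Bool} :
    ((x, lab, y) ∈ (G s L enc hs).edges) ↔
      P s L enc hs ((e s L).symm x) lab ((e s L).symm y) := by
  letI : DecidablePred (fun z : St s L × (Option Bool × Option Bool) × St s L =>
      P s L enc hs z.1 z.2.1 z.2.2) := fun _ => Classical.propDecidable _
  show _ ∈ List.map _ _ ↔ _
  refine List.mem_map.trans ?_
  constructor
  · rintro ⟨⟨x', lab', y'⟩, hz, heq⟩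
    rw [Finset.mem_toList, Finset.mem_filter] at hz
    obtain ⟨rfl, rfl, rfl⟩ : e s L x' = x ∧ lab' = lab ∧ e s L y' = y := by
      obtain ⟨h1, h2⟩ := Prod.mk.inj heq; obtain ⟨h3, h4⟩ := Prod.mk.inj h2; exact ⟨h1, h3, h4⟩
    simpa using hz.2
  · intro hP
    refine ⟨((e s L).symm x, lab, (e s L).symm y), ?_,
      Prod.ext ((e s L).apply_symm_apply x) (Prod.ext rfl ((e s L).apply_symm_apply y))⟩
    rw [Finset.mem_toList, Finset.mem_filter]
    exact ⟨Finset.mem_univ _, hP⟩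

lemma edge_of_trF {x : Σ l : Fin (L+1), Fin l → Bool} {b : Bool} {y : St s L}
    (h : trF s L enc hs x b = some y) :
    ((e s L) (Sum.inl x), ((some b : Option Bool), (none : Option Bool)),
      (e s L) y) ∈ (G s L enc hs).edges := by
  refine (mem_edges s L enc hs).mpr ?_
  left
  exact ⟨x, b, ((e s L).symm_apply_apply _), rfl, h.trans (congrArg some ((e s L).symm_apply_apply y).symm)⟩

lemma edge_of_eps (es : (Fin s → Bool) × Fin s) :
    ((e s L) (Sum.inr es), ((none : Option Bool), some (epsF s L es).1),
      (e s L) (epsF s L es).2) ∈ (G s L enc hs).edges := by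
  refine (mem_edges s L enc hs).mpr ?_
  right
  exact ⟨es, ((e s L).symm_apply_apply _), rfl, ((e s L).symm_apply_apply _)⟩

variable {V : Fin s → Bool}

include hpf in
lemma read_enc_aux : ∀ d m, m + d = (enc V).length → 0 < d → (enc V).length ≤ L →
    ∀ (f : Fin m → Bool), List.ofFn f = (enc V).take m →
    ∀ (hm : m < L + 1),
    (G s L enc hs).Reads ((e s L) (Sum.inl ⟨⟨m, hm⟩, f⟩)) ((e s L) (Sum.inr (V, ⟨0, hs⟩)))
      ((enc V).drop m) [] := by
  intro d
  induction d with
  | zero => omega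
  | succ d ih =>
      intro m hmd hd hL f hf hm
      have hmlen : m < (enc V).length := by omega
      set b := (enc V)[m] with hb
      have hq' : List.ofFn f ++ [b] = (enc V).take (m+1) := by
        rw [hf, hb]
        exact List.take_concat_get' _ _ hmlen
      have hdrop : (enc V).drop m = b :: (enc V).drop (m+1) := List.drop_eq_getElem_cons hmlen
      by_cases hlast : m + 1 = (enc V).length
      · -- complete codeword
        have htake : (enc V).take (m+1) = enc V := by
          rw [hlast]; exact List.take_length
        have hdec : dec s enc (List.ofFn f ++ [b]) = some V := by
          rw [hq', htake]; exact dec_enc s enc hpf V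
        have htr : trF s L enc hs ⟨⟨m, hm⟩, f⟩ b = some (Sum.inr (V, ⟨0, hs⟩)) := by
          unfold trF
          simp only
          rw [hdec]
          rfl
        have hedge := edge_of_trF s L enc hs htr
        have : (enc V).drop (m+1) = [] := by rw [hlast]; exact List.drop_length
        rw [hdrop, this]
        have := Automaton.Reads.step hedge
          (Automaton.Reads.nil (G := G s L enc hs) ((e s L) (Sum.inr (V, ⟨0, hs⟩))))
        simpa using this
      · -- proper prefix
        have hm1len : m + 1 < (enc V).length := by omega
        have hdec : dec s enc (List.ofFn f ++ [b]) = none := by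
          cases hdecv : dec s enc (List.ofFn f ++ [b]) with
          | none => rfl
          | some V' =>
              exfalso
              have hv' : enc V' = (enc V).take (m+1) := by
                rw [← hq']; exact dec_eq_some s enc hdecv
              have : V' = V := hpf _ _ (hv' ▸ List.take_prefix _ _)
              rw [this] at hv'
              have := congrArg List.length hv'
              simp [List.length_take] at this
              omega
        have hm1L : m + 1 ≤ L := by omega
        have htr2 : trF s L enc hs ⟨⟨m, hm⟩, f⟩ b =
            some (Sum.inl ⟨⟨m + 1, by omega⟩, Fin.snoc f b⟩) := by
          unfold trF
          simp only
          rw [hdec, dif_pos hm1L]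
          rfl
        have hedge := edge_of_trF s L enc hs htr2
        have hsnoc : List.ofFn (Fin.snoc f b : Fin (m+1) → Bool) = (enc V).take (m+1) := by
          rw [List.ofFn_succ']
          simp only [Fin.snoc_castSucc, Fin.snoc_last]
          rw [List.concat_eq_append, hq']
        have hrest := ih (m+1) (by omega) (by omega) hL (Fin.snoc f b) hsnoc (by omega)
        rw [hdrop]
        have := Automaton.Reads.step hedge hrest
        simpa using this

include hpf in
lemma read_enc (hlen : 0 < (enc V).length) (hL : (enc V).length ≤ L) :
    (G s L enc hs).Reads ((e s L) (root s L)) ((e s L) (Sum.inr (V, ⟨0, hs⟩))) (enc V) [] := by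
  have := read_enc_aux s L enc hs hpf (enc V).length 0 (by omega) hlen hL
    (fun i => i.elim0) (by simp) (by omega)
  simpa [root] using this

lemma emit_aux : ∀ d (i : Fin s), s = (i : ℕ) + d →
    (G s L enc hs).Reads ((e s L) (Sum.inr (V, i))) ((e s L) (root s L)) []
      ((List.ofFn V).drop i) := by
  intro d
  induction d with
  | zero => intro i h; exact absurd h (by have := i.2; omega)
  | succ d ih =>
      intro i hi
      have hil : (i : ℕ) < (List.ofFn V).length := by simp [i.2]
      have hdrop : (List.ofFn V).drop i = V i :: (List.ofFn V).drop ((i : ℕ)+1) := by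
        rw [List.drop_eq_getElem_cons hil]
        congr 1
        simp
      by_cases hlt : (i : ℕ) + 1 < s
      · have heps : epsF s L (V, i) = (V i, Sum.inr (V, ⟨(i : ℕ)+1, hlt⟩)) := by
          unfold epsF
          simp only
          simp [hlt]
          rfl
        have hedge := edge_of_eps s L enc hs (V, i)
        rw [heps] at hedge
        have hrest := ih ⟨(i : ℕ)+1, hlt⟩ (by simp; omega)
        rw [hdrop]
        have := Automaton.Reads.step hedge hrest
        simpa using this
      · have his : (i : ℕ) + 1 = s := by have := i.2; omega
        have heps : epsF s L (V, i) = (V i, root s L) := by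
          unfold epsF
          simp only
          simp [hlt]
        have hedge := edge_of_eps s L enc hs (V, i)
        rw [heps] at hedge
        have hnil := Automaton.Reads.nil (G := G s L enc hs) ((e s L) (root s L))
        have hend : (List.ofFn V).drop ((i : ℕ)+1) = [] := by
          apply List.drop_eq_nil_of_le
          simp [his]
        rw [hdrop, hend]
        have := Automaton.Reads.step hedge hnil
        simpa using this

include hpf in
lemma read_block (hlen : 0 < (enc V).length) (hL : (enc V).length ≤ L) :
    (G s L enc hs).Reads ((e s L) (root s L)) ((e s L) (root s L)) (enc V) (List.ofFn V) := by
  have h1 := read_enc s L enc hs hpf (V := V) hlen hL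
  have h2 := emit_aux s L enc hs (V := V) s ⟨0, hs⟩ (by simp)
  have := reads_trans h1 h2
  simpa using this

include hpf in
lemma read_list (hlen : ∀ W, 0 < (enc W).length) (hL : ∀ W, (enc W).length ≤ L) :
    ∀ (Vs : List (Fin s → Bool)),
    (G s L enc hs).Reads ((e s L) (root s L)) ((e s L) (root s L))
      (Vs.map enc).flatten (Vs.map (fun W => List.ofFn W)).flatten := by
  intro Vs
  induction Vs with
  | nil => simpa using Automaton.Reads.nil _
  | cons W Ws ih =>
      have := reads_trans (read_block s L enc hs hpf (hlen W) (hL W)) ih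
      simpa using this

lemma rank_eps_lt (es : (Fin s → Bool) × Fin s) :
    rank s L ((epsF s L es).2) < rank s L (Sum.inr es) := by
  obtain ⟨W, i⟩ := es
  have hi := i.2
  unfold epsF rank
  simp only
  by_cases h : (i : ℕ) + 1 < s <;> simp [h, root] <;> omega

lemma rank_nil {x y : Fin (G s L enc hs).n} {u v} (h : (G s L enc hs).Reads x y u v)
    (hu : u = []) : rank s L ((e s L).symm y) ≤ rank s L ((e s L).symm x) := by
  induction h with
  | nil => exact le_refl _
  | step hmem hsub ih =>
      rename_i x' t' y' a b u' v' 
      have ha : a = none := by cases a <;> simp_all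
      have hP := (mem_edges s L enc hs).mp hmem
      rcases hP with ⟨rs, bb, hx, hlab, htr⟩ | ⟨es, hx, hlab, hy⟩
      · exfalso
        rw [ha] at hlab
        simp at hlab
      · have h1 : rank s L ((e s L).symm t') < rank s L ((e s L).symm x') := by
          rw [hx, hy]
          exact rank_eps_lt s L es
        have h2 := ih (by cases a <;> simp_all)
        omega

lemma reads_funct_aux {x y : Fin (G s L enc hs).n} {u v} (h1 : (G s L enc hs).Reads x y u v) :
    ∀ u' v', u' = u → (G s L enc hs).Reads x y u' v' → v = v' := by
  induction h1 with
  | nil s' =>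
      intro u' v' hu h2
      cases h2 with
      | nil => rfl
      | step hmem hsub =>
          rename_i t' a b u2 v2
          exfalso
          have ha : a = none := by cases a <;> simp_all
          have hu2 : u2 = [] := by cases a <;> simp_all
          have hP := (mem_edges s L enc hs).mp hmem
          rcases hP with ⟨rs, bb, hx, hlab, htr⟩ | ⟨es, hx, hlab, hy⟩
          · rw [ha] at hlab; simp at hlab
          · have h1 : rank s L ((e s L).symm t') < rank s L ((e s L).symm s') := by
              rw [hx, hy]
              exact rank_eps_lt s L es
            have h2 := rank_nil s L enc hs hsub hu2
            omega
  | step hmem hsub ih =>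
      rename_i x' t' y' a b u1 v1
      intro u' v' hu h2
      cases h2 with
      | nil =>
          exfalso
          have ha : a = none := by cases a <;> simp_all
          have hu1 : u1 = [] := by cases a <;> simp_all
          have hP := (mem_edges s L enc hs).mp hmem
          rcases hP with ⟨rs, bb, hx, hlab, htr⟩ | ⟨es, hx, hlab, hy⟩
          · rw [ha] at hlab; simp at hlab
          · have hlt : rank s L ((e s L).symm t') < rank s L ((e s L).symm x') := by
              rw [hx, hy]
              exact rank_eps_lt s L es
            have h2 := rank_nil s L enc hs hsub hu1
            omega
      | step hmem2 hsub2 =>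
          rename_i t2 a2 b2 u2 v2
          have hP1 := (mem_edges s L enc hs).mp hmem
          have hP2 := (mem_edges s L enc hs).mp hmem2
          rcases hP1 with ⟨rs, bb, hx, hlab, htr⟩ | ⟨es, hx, hlab, hy⟩ <;>
            rcases hP2 with ⟨rs2, bb2, hx2, hlab2, htr2⟩ | ⟨es2, hx2, hlab2, hy2⟩
          · obtain ⟨rfl, rfl⟩ : a = some bb ∧ b = none := by simpa [Prod.ext_iff] using hlab
            obtain ⟨rfl, rfl⟩ : a2 = some bb2 ∧ b2 = none := by
              simpa [Prod.ext_iff] using hlab2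
            have hrs : rs2 = rs := Sum.inl.inj ((hx2.symm.trans hx))
            obtain ⟨rfl, rfl⟩ : bb2 = bb ∧ u2 = u1 := by simpa using hu
            rw [hrs] at htr2
            have ht : t2 = t' := (e s L).symm.injective (Option.some.inj (htr2.symm.trans htr))
            rw [ht] at hsub2
            simpa using ih _ _ rfl hsub2
          · exfalso
            rw [hx] at hx2
            simp at hx2
          · exfalso
            rw [hx] at hx2
            simp at hx2
          · obtain ⟨rfl, rfl⟩ : a = none ∧ b = some (epsF s L es).1 := by
              simpa [Prod.ext_iff] using hlab
            obtain ⟨rfl, rfl⟩ : a2 = none ∧ b2 = some (epsF s L es2).1 := by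
              simpa [Prod.ext_iff] using hlab2
            have hes : es2 = es := Sum.inr.inj ((hx2.symm.trans hx))
            rw [hes] at hy2 ⊢
            have hu21 : u2 = u1 := by simpa using hu
            have ht : t2 = t' := (e s L).symm.injective (hy2.trans hy.symm)
            rw [ht, hu21] at hsub2
            simpa using ih _ _ rfl hsub2

lemma reads_funct {x y : Fin (G s L enc hs).n} {u v v'}
    (h1 : (G s L enc hs).Reads x y u v) (h2 : (G s L enc hs).Reads x y u v') : v = v' :=
  reads_funct_aux s L enc hs h1 u v' rfl h2

lemma rel_bounded (p : List Bool) :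
    {x | (G s L enc hs).Rel p x}.Finite ∧
      {x | (G s L enc hs).Rel p x}.ncard ≤
        Fintype.card (St s L) * Fintype.card (St s L) := by
  classical
  set n := Fintype.card (St s L)
  set S := {x | (G s L enc hs).Rel p x} with hS
  have hne' : Nonempty (Fin (G s L enc hs).n × Fin (G s L enc hs).n) := by
    constructor
    exact ((e s L) (root s L), (e s L) (root s L))
  set f : List Bool → Fin (G s L enc hs).n × Fin (G s L enc hs).n :=
    fun x => if h : (G s L enc hs).Rel p x then (h.choose, h.choose_spec.choose)
      else ((e s L) (root s L), (e s L) (root s L)) with hf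
  have hreads : ∀ x ∈ S, (G s L enc hs).Reads (f x).1 (f x).2 p x := by
    intro x hx
    have hx' : (G s L enc hs).Rel p x := hx
    simp only [hf, dif_pos hx']
    exact hx'.choose_spec.choose_spec
  have hinj : Set.InjOn f S := by
    intro x1 h1 x2 h2 hfe
    have r1 := hreads x1 h1
    have r2 := hreads x2 h2
    rw [hfe] at r1
    exact reads_funct s L enc hs r1 r2
  have himfin : (f '' S).Finite := Set.Finite.subset (Set.finite_univ) (Set.subset_univ _)
  have hfin : S.Finite := Set.Finite.of_finite_image himfin hinj
  refine ⟨hfin, ?_⟩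
  calc S.ncard = (f '' S).ncard := (Set.ncard_image_of_injOn hinj).symm
    _ ≤ (Set.univ : Set (Fin (G s L enc hs).n × Fin (G s L enc hs).n)).ncard :=
        Set.ncard_le_ncard (Set.subset_univ _) Set.finite_univ
    _ = n * n := by
        rw [Set.ncard_univ, Nat.card_eq_fintype_card]
        simp [G, n]
        exact (Fintype.card_prod _ _).trans (congrArg₂ (· * ·) (Fintype.card_fin _) (Fintype.card_fin _))

end Build

section Code

lemma idxlt (k t : ℕ) (i : Fin t) (j : Fin k) : (i : ℕ) * k + (j : ℕ) < t * k := by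
  have h1 : (i : ℕ) + 1 ≤ t := i.2
  calc (i : ℕ) * k + (j : ℕ) < (i : ℕ) * k + k := by have := j.2; omega
    _ = ((i : ℕ) + 1) * k := by ring
    _ ≤ t * k := Nat.mul_le_mul_right k h1

def blockOf (k t : ℕ) (V : Fin (t * k) → Bool) (i : Fin t) : List Bool :=
  List.ofFn (fun j : Fin k => V ⟨(i : ℕ) * k + j, idxlt k t i j⟩)

def cnt (k t : ℕ) (r : List Bool) (V : Fin (t * k) → Bool) : ℕ :=
  (Finset.univ.filter (fun i : Fin t => blockOf k t V i = r)).card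

def Aj (k t : ℕ) (r : List Bool) (j : ℕ) : Finset (Fin (t * k) → Bool) :=
  Finset.univ.filter (fun V => cnt k t r V = j)

def cbits (t : ℕ) : ℕ := Nat.clog 2 (t + 1)

def wbits (k t : ℕ) (r : List Bool) (j : ℕ) : ℕ := Nat.clog 2 (Aj k t r j).card

def natBits (len m : ℕ) : List Bool := List.ofFn (fun i : Fin len => m.testBit i)

noncomputable def enc (k t : ℕ) (r : List Bool) (V : Fin (t * k) → Bool) : List Bool :=
  natBits (cbits t) (cnt k t r V) ++
    natBits (wbits k t r (cnt k t r V)) ((Aj k t r (cnt k t r V)).toList.idxOf V)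

lemma natBits_length (len m : ℕ) : (natBits len m).length = len := by simp [natBits]

lemma natBits_inj {len m1 m2 : ℕ} (h1 : m1 < 2 ^ len) (h2 : m2 < 2 ^ len)
    (h : natBits len m1 = natBits len m2) : m1 = m2 := by
  apply Nat.eq_of_testBit_eq
  intro i
  by_cases hi : i < len
  · have := List.ofFn_inj.mp h
    exact congrFun this ⟨i, hi⟩
  · have b1 : m1.testBit i = false := Nat.testBit_lt_two_pow (lt_of_lt_of_le h1
      (Nat.pow_le_pow_right (by norm_num) (by omega)))
    have b2 : m2.testBit i = false := Nat.testBit_lt_two_pow (lt_of_lt_of_le h2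
      (Nat.pow_le_pow_right (by norm_num) (by omega)))
    rw [b1, b2]

lemma enc_length (k t : ℕ) (r : List Bool) (V : Fin (t * k) → Bool) :
    (enc k t r V).length = cbits t + wbits k t r (cnt k t r V) := by
  simp [enc, natBits_length]

lemma cnt_le (k t : ℕ) (r : List Bool) (V : Fin (t * k) → Bool) : cnt k t r V ≤ t := by
  calc cnt k t r V ≤ (Finset.univ : Finset (Fin t)).card := Finset.card_filter_le _ _
    _ = t := by simp

lemma mem_Aj_self (k t : ℕ) (r : List Bool) (V : Fin (t * k) → Bool) :
    V ∈ Aj k t r (cnt k t r V) := by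
  simp [Aj]

lemma idx_lt_card (k t : ℕ) (r : List Bool) (V : Fin (t * k) → Bool) :
    (Aj k t r (cnt k t r V)).toList.idxOf V < (Aj k t r (cnt k t r V)).card := by
  rw [← Finset.length_toList]
  exact List.idxOf_lt_length_iff.mpr (Finset.mem_toList.mpr (mem_Aj_self k t r V))

lemma cnt_lt_pow (t : ℕ) {j : ℕ} (hj : j ≤ t) : j < 2 ^ cbits t :=
  lt_of_lt_of_le (by omega : j < t + 1) (Nat.le_pow_clog one_lt_two _)

lemma idx_lt_pow (k t : ℕ) (r : List Bool) (V : Fin (t * k) → Bool) :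
    (Aj k t r (cnt k t r V)).toList.idxOf V < 2 ^ wbits k t r (cnt k t r V) :=
  lt_of_lt_of_le (idx_lt_card k t r V) (Nat.le_pow_clog one_lt_two _)

lemma enc_pf (k t : ℕ) (r : List Bool) :
    ∀ V V', enc k t r V <+: enc k t r V' → V = V' := by
  intro V V' hpre
  have key : ∀ W, (enc k t r W).take (cbits t) = natBits (cbits t) (cnt k t r W) := by
    intro W
    rw [enc, List.take_append_of_le_length (le_of_eq (natBits_length _ _).symm),
      List.take_of_length_le (le_of_eq (natBits_length _ _))]
  have h1 : (enc k t r V').take (cbits t) = (enc k t r V).take (cbits t) := by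
    obtain ⟨tail, htail⟩ := hpre
    rw [← htail, List.take_append_of_le_length (by rw [enc_length]; omega)]
  have hcnt : cnt k t r V = cnt k t r V' := by
    apply natBits_inj (cnt_lt_pow t (cnt_le k t r V)) (cnt_lt_pow t (cnt_le k t r V'))
    rw [← key V, ← key V', h1]
  have hlen : (enc k t r V).length = (enc k t r V').length := by
    rw [enc_length, enc_length, hcnt]
  have heq : enc k t r V = enc k t r V' := hpre.eq_of_length hlen
  rw [enc, enc, hcnt] at heq
  have h2 := List.append_cancel_left heq
  have hidx : (Aj k t r (cnt k t r V')).toList.idxOf V =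
      (Aj k t r (cnt k t r V')).toList.idxOf V' := by
    apply natBits_inj _ _ h2
    · rw [← hcnt]; exact idx_lt_pow k t r V
    · exact idx_lt_pow k t r V'
  have hVmem : V ∈ (Aj k t r (cnt k t r V')).toList := by
    rw [Finset.mem_toList, ← hcnt]
    exact mem_Aj_self k t r V
  have hV'mem : V' ∈ (Aj k t r (cnt k t r V')).toList := by
    rw [Finset.mem_toList]
    exact mem_Aj_self k t r V'
  exact (List.idxOf_inj hVmem).mp hidx

set_option maxHeartbeats 1000000 in
lemma card_Aj_bound (k t : ℕ) (r : List Bool) (hr : r.length = k) (hk : 0 < k)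
    (β γ : ℝ) (hβ : 0 < β) (hγ : 0 < γ)
    (hsum : β + ((2 : ℝ) ^ k - 1) * γ = 1) (j : ℕ) :
    ((Aj k t r j).card : ℝ) * (β ^ j * γ ^ (t - j)) ≤ 1 := by
  classical
  set ν : (Fin k → Bool) → ℝ := fun f => if List.ofFn f = r then β else γ with hν
  have hν0 : ∀ f, 0 < ν f := by
    intro f
    by_cases h : List.ofFn f = r <;> simp [hν, h, hβ, hγ]
  set f₀ : Fin k → Bool := fun i => r.get ⟨i, by rw [hr]; exact i.2⟩ with hf₀
  have hof₀ : List.ofFn f₀ = r := by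
    apply List.ext_getElem
    · simp [hr]
    · intro i h1 h2
      simp [hf₀]
  have hfilter : Finset.univ.filter (fun f : Fin k → Bool => List.ofFn f = r) = {f₀} := by
    ext f
    simp only [Finset.mem_filter, Finset.mem_univ, true_and, Finset.mem_singleton]
    constructor
    · intro h
      exact List.ofFn_inj.mp (h.trans hof₀.symm)
    · rintro rfl
      exact hof₀
  have hcardfun : (Finset.univ : Finset (Fin k → Bool)).card = 2 ^ k := by
    simp [Finset.card_univ]
  have hνsum : ∑ f : Fin k → Bool, ν f = 1 := by
    rw [← Finset.sum_filter_add_sum_filter_not Finset.univ (fun f => List.ofFn f = r)]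
    have h1 : ∑ f ∈ Finset.univ.filter (fun f : Fin k → Bool => List.ofFn f = r), ν f = β := by
      rw [hfilter, Finset.sum_singleton]
      simp [hν, hof₀]
    have h2 : ∑ f ∈ Finset.univ.filter (fun f : Fin k → Bool => ¬ List.ofFn f = r), ν f
        = ((2 : ℝ) ^ k - 1) * γ := by
      have : ∀ f ∈ Finset.univ.filter (fun f : Fin k → Bool => ¬ List.ofFn f = r),
          ν f = γ := by
        intro f hf
        simp only [Finset.mem_filter] at hf
        simp [hν, hf.2]
      rw [Finset.sum_congr rfl this, Finset.sum_const, nsmul_eq_mul]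
      congr 1
      have hcards := Finset.card_filter_add_card_filter_not
        (s := (Finset.univ : Finset (Fin k → Bool))) (fun f => List.ofFn f = r)
      rw [hfilter, hcardfun, Finset.card_singleton] at hcards
      have h2k : 1 ≤ 2 ^ k := Nat.one_le_two_pow
      have : (Finset.univ.filter (fun f : Fin k → Bool => ¬ List.ofFn f = r)).card
          = 2 ^ k - 1 := by omega
      rw [this]
      push_cast [h2k]
      ring
    rw [h1, h2, hsum]
  set Ψ : (Fin (t * k) → Bool) → (Fin t → Fin k → Bool) :=
    fun V i j' => V ⟨(i : ℕ) * k + j', idxlt k t i j'⟩ with hΨ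
  have hΨinj : ∀ V1 ∈ Aj k t r j, ∀ V2 ∈ Aj k t r j, Ψ V1 = Ψ V2 → V1 = V2 := by
    intro V1 _ V2 _ h
    funext m
    have hmk : (m : ℕ) % k < k := Nat.mod_lt _ hk
    have hdiv : (m : ℕ) / k < t := by
      apply Nat.div_lt_of_lt_mul
      have h := m.2
      rw [Nat.mul_comm k t]
      exact h
    have := congrFun (congrFun h ⟨(m : ℕ) / k, hdiv⟩) ⟨(m : ℕ) % k, hmk⟩
    simp only [hΨ] at this
    have hidx : (m : ℕ) / k * k + (m : ℕ) % k = (m : ℕ) := Nat.div_add_mod' _ _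
    convert this using 2 <;> exact (Fin.ext hidx.symm)
  have hprod : ∀ V ∈ Aj k t r j, (∏ i : Fin t, ν (Ψ V i)) = β ^ j * γ ^ (t - j) := by
    intro V hV
    have hcnt : cnt k t r V = j := by
      simpa [Aj] using hV
    have hblock : ∀ i, ν (Ψ V i) = if blockOf k t V i = r then β else γ := by
      intro i
      rfl
    rw [Finset.prod_congr rfl (fun i _ => hblock i),
      ← Finset.prod_filter_mul_prod_filter_not Finset.univ (fun i => blockOf k t V i = r)]
    have hc1 : (Finset.univ.filter (fun i : Fin t => blockOf k t V i = r)).card = j := by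
      rw [← hcnt]; rfl
    have hcards := Finset.card_filter_add_card_filter_not
      (s := (Finset.univ : Finset (Fin t))) (fun i => blockOf k t V i = r)
    rw [hc1] at hcards
    simp only [Finset.card_univ, Fintype.card_fin] at hcards
    have hc2 : (Finset.univ.filter (fun i : Fin t => ¬ blockOf k t V i = r)).card = t - j := by
      omega
    have e1 : (∏ i ∈ Finset.univ.filter (fun i : Fin t => blockOf k t V i = r),
        if blockOf k t V i = r then β else γ) = β ^ j := by
      have hconst : ∀ i ∈ Finset.univ.filter (fun i : Fin t => blockOf k t V i = r),
          (if blockOf k t V i = r then β else γ) = β :=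
        fun i hi => if_pos ((Finset.mem_filter.mp hi).2)
      rw [Finset.prod_congr rfl hconst, Finset.prod_const, hc1]
    have e2 : (∏ i ∈ Finset.univ.filter (fun i : Fin t => ¬ blockOf k t V i = r),
        if blockOf k t V i = r then β else γ) = γ ^ (t - j) := by
      have hconst : ∀ i ∈ Finset.univ.filter (fun i : Fin t => ¬ blockOf k t V i = r),
          (if blockOf k t V i = r then β else γ) = γ :=
        fun i hi => if_neg ((Finset.mem_filter.mp hi).2)
      rw [Finset.prod_congr rfl hconst, Finset.prod_const, hc2]
    rw [e1, e2]
  calc ((Aj k t r j).card : ℝ) * (β ^ j * γ ^ (t - j))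
      = ∑ _V ∈ Aj k t r j, (β ^ j * γ ^ (t - j)) := by
        rw [Finset.sum_const, nsmul_eq_mul]
    _ = ∑ V ∈ Aj k t r j, ∏ i : Fin t, ν (Ψ V i) :=
        Finset.sum_congr rfl (fun V hV => (hprod V hV).symm)
    _ = ∑ F ∈ (Aj k t r j).image Ψ, ∏ i : Fin t, ν (F i) :=
        (Finset.sum_image (f := fun F => ∏ i : Fin t, ν (F i)) hΨinj).symm
    _ ≤ ∑ F : Fin t → Fin k → Bool, ∏ i : Fin t, ν (F i) :=
        Finset.sum_le_sum_of_subset_of_nonneg (Finset.subset_univ _)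
          (fun F _ _ => le_of_lt (Finset.prod_pos (fun i _ => hν0 _)))
    _ = ∏ _i : Fin t, ∑ f : Fin k → Bool, ν f := by
        have hps := Finset.prod_univ_sum (fun _ : Fin t => (Finset.univ : Finset (Fin k → Bool)))
          (fun _ f => ν f)
        rw [Fintype.piFinset_univ] at hps
        exact hps.symm
    _ = 1 := by
        rw [Finset.prod_congr rfl (fun i _ => hνsum)]
        simp

lemma wbits_le (k t : ℕ) (r : List Bool) (hr : r.length = k) (hk : 0 < k)
    (β γ : ℝ) (hβ0 : 0 < β) (hβ1 : β ≤ 1) (hγ0 : 0 < γ) (hγ1 : γ ≤ 1)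
    (hsum : β + ((2 : ℝ) ^ k - 1) * γ = 1) (j : ℕ) :
    (wbits k t r j : ℝ) ≤
      1 + (j : ℝ) * Real.logb 2 β⁻¹ + ((t - j : ℕ) : ℝ) * Real.logb 2 γ⁻¹ := by
  have hL1 : 0 ≤ Real.logb 2 β⁻¹ :=
    Real.logb_nonneg one_lt_two (one_le_inv_iff₀.mpr ⟨hβ0, hβ1⟩)
  have hL2 : 0 ≤ Real.logb 2 γ⁻¹ :=
    Real.logb_nonneg one_lt_two (one_le_inv_iff₀.mpr ⟨hγ0, hγ1⟩)
  by_cases hm : (Aj k t r j).card ≤ 1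
  · have h0 : wbits k t r j = 0 := by
      have := Nat.clog_mono_right 2 hm
      simpa [wbits, Nat.clog_one_right] using this
    rw [h0]
    have h1 : 0 ≤ (j : ℝ) * Real.logb 2 β⁻¹ := mul_nonneg (by positivity) hL1
    have h2 : 0 ≤ ((t - j : ℕ) : ℝ) * Real.logb 2 γ⁻¹ := mul_nonneg (by positivity) hL2
    push_cast
    linarith
  · push_neg at hm
    set w := wbits k t r j with hwdef
    have hw1 : 1 ≤ w := Nat.clog_pos one_lt_two hm
    have hpow : (2 : ℝ) ^ (w - 1) < ((Aj k t r j).card : ℝ) := by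
      exact_mod_cast Nat.pow_pred_clog_lt_self one_lt_two hm
    have hcard := card_Aj_bound k t r hr hk β γ hβ0 hγ0 hsum j
    have hbg : 0 < β ^ j * γ ^ (t - j) := by positivity
    have hmle : ((Aj k t r j).card : ℝ) ≤ (β ^ j * γ ^ (t - j))⁻¹ := by
      rw [← one_div, le_div_iff₀ hbg]
      exact hcard
    have hinv : (β ^ j * γ ^ (t - j))⁻¹ = β⁻¹ ^ j * γ⁻¹ ^ (t - j) := by
      rw [mul_inv, inv_pow, inv_pow]
    have hlt : (2 : ℝ) ^ (w - 1) ≤ β⁻¹ ^ j * γ⁻¹ ^ (t - j) := by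
      rw [← hinv]
      exact le_of_lt (lt_of_lt_of_le hpow hmle)
    have hlogb : Real.logb 2 ((2 : ℝ) ^ (w - 1)) ≤
        Real.logb 2 (β⁻¹ ^ j * γ⁻¹ ^ (t - j)) :=
      (Real.logb_le_logb one_lt_two (by positivity) (by positivity)).mpr hlt
    rw [Real.logb_pow, Real.logb_self_eq_one one_lt_two, mul_one] at hlogb
    rw [Real.logb_mul (by positivity) (by positivity), Real.logb_pow, Real.logb_pow]
      at hlogb
    have hcast : ((w - 1 : ℕ) : ℝ) = (w : ℝ) - 1 := by
      push_cast [hw1]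
      ring
    rw [hcast] at hlogb
    linarith

lemma cbits_pos (t : ℕ) (ht : 0 < t) : 0 < cbits t :=
  Nat.clog_pos one_lt_two (by omega)

lemma wbits_le_s (k t : ℕ) (r : List Bool) (j : ℕ) : wbits k t r j ≤ t * k := by
  have hcard : (Aj k t r j).card ≤ 2 ^ (t * k) := by
    calc (Aj k t r j).card ≤ (Finset.univ : Finset (Fin (t * k) → Bool)).card :=
          Finset.card_filter_le _ _
      _ = 2 ^ (t * k) := by simp [Finset.card_univ]
  calc wbits k t r j ≤ Nat.clog 2 (2 ^ (t * k)) := Nat.clog_mono_right 2 hcard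
    _ = t * k := Nat.clog_pow 2 _ one_lt_two

section Seq

variable (α : ℕ → Bool) (k t : ℕ)

/-- the `i`-th aligned super-block of `α`, of bit-length `t*k`. -/
def sb (i : ℕ) : Fin (t * k) → Bool := fun m => α (i * (t * k) + m)

lemma flatten_blocks (N : ℕ) :
    (((List.range N).map (fun i => sb α k t i)).map (fun W => List.ofFn W)).flatten
      = prefixOf α (N * (t * k)) := by
  induction N with
  | zero => simp [prefixOf]
  | succ N ih =>
      rw [List.range_succ]
      simp only [List.map_append, List.map_map, List.flatten_append]
      rw [List.map_map] at ih
      rw [ih]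
      have hns : (N + 1) * (t * k) = N * (t * k) + t * k := by ring
      rw [hns]
      unfold prefixOf
      rw [List.ofFn_add]
      simp only [Fin.coe_castAdd, Fin.coe_natAdd, List.map_cons, List.map_nil,
        List.flatten_cons, List.flatten_nil, List.append_nil, Function.comp_apply]
      rfl

lemma desc_length (r : List Bool) (N : ℕ) :
    (((List.range N).map (fun i => sb α k t i)).map (enc k t r)).flatten.length
      = ∑ i ∈ Finset.range N, (cbits t + wbits k t r (cnt k t r (sb α k t i))) := by
  induction N with
  | zero => simp
  | succ N ih =>
      rw [List.range_succ]
      simp only [List.map_append, List.map_map, List.flatten_append, List.length_append]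
      rw [List.map_map] at ih
      rw [ih, Finset.sum_range_succ]
      simp [enc_length]

lemma card_filter_range (t : ℕ) (p : ℕ → Prop) [DecidablePred p] :
    ((Finset.range t).filter p).card = (Finset.univ.filter (fun i : Fin t => p i)).card := by
  have hmap : ((Finset.range t).filter p)
      = (Finset.univ.filter (fun i : Fin t => p i)).map Fin.valEmbedding := by
    ext a
    simp only [Finset.mem_filter, Finset.mem_range, Finset.mem_map, Finset.mem_univ,
      true_and, Fin.valEmbedding_apply]
    constructor
    · rintro ⟨ha, hpa⟩
      exact ⟨⟨a, ha⟩, hpa, rfl⟩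
    · rintro ⟨i, hpi, rfl⟩
      exact ⟨i.2, hpi⟩
  rw [hmap, Finset.card_map]

lemma alignedCount_add (r : List Bool) (N : ℕ) :
    alignedCount α k r (N * t + t) = alignedCount α k r (N * t) + cnt k t r (sb α k t N) := by
  classical
  unfold alignedCount
  rw [Finset.range_add, Finset.filter_union, Finset.card_union_of_disjoint]
  · congr 1
    rw [Finset.filter_map, Finset.card_map, card_filter_range]
    unfold cnt
    apply congrArg
    apply Finset.filter_congr
    intro i _
    have hblock : (List.ofFn fun j : Fin k => α ((addLeftEmbedding (N * t)) (i : ℕ) * k + ↑j))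
        = blockOf k t (sb α k t N) i := by
      unfold blockOf sb
      apply congrArg
      funext j
      apply congrArg
      simp only [addLeftEmbedding_apply]
      ring
    simp only [Function.comp_apply]
    rw [hblock]
  · rw [Finset.disjoint_left]
    intro a ha hb
    rw [Finset.mem_filter, Finset.mem_range] at ha
    rw [Finset.mem_filter, Finset.mem_map] at hb
    obtain ⟨i, hi, hia⟩ := hb.1
    rw [addLeftEmbedding_apply] at hia
    omega

lemma sum_cnt (r : List Bool) (N : ℕ) :
    ∑ i ∈ Finset.range N, cnt k t r (sb α k t i) = alignedCount α k r (N * t) := by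
  induction N with
  | zero => simp [alignedCount]
  | succ N ih =>
      rw [Finset.sum_range_succ, ih, ← alignedCount_add]
      congr 1
      ring

lemma alignedCount_mono (r : List Bool) {N M : ℕ} (h : N ≤ M) :
    alignedCount α k r N ≤ alignedCount α k r M := by
  unfold alignedCount
  apply Finset.card_le_card
  apply Finset.filter_subset_filter
  exact Finset.range_subset_range.mpr h

lemma alignedCount_le (r : List Bool) (N : ℕ) : alignedCount α k r N ≤ N := by
  calc alignedCount α k r N ≤ (Finset.range N).card := Finset.card_filter_le _ _
    _ = N := Finset.card_range N

lemma sum_alignedCount (hk : 0 < k) (N : ℕ) :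
    ∑ f : Fin k → Bool, alignedCount α k (List.ofFn f) N = N := by
  classical
  unfold alignedCount
  have hswap : ∀ i : ℕ, (∑ f : Fin k → Bool,
      if (List.ofFn fun j : Fin k => α (i * k + j)) = List.ofFn f then (1 : ℕ) else 0) = 1 := by
    intro i
    have : ∀ f : Fin k → Bool,
        ((List.ofFn fun j : Fin k => α (i * k + j)) = List.ofFn f)
          ↔ ((fun j : Fin k => α (i * k + j)) = f) := fun f => List.ofFn_inj
    rw [Finset.sum_congr rfl (fun f _ => by rw [if_congr (this f) rfl rfl])]
    rw [Finset.sum_ite_eq Finset.univ (fun j : Fin k => α (i * k + j)) (fun _ => 1)]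
    simp
  calc ∑ f : Fin k → Bool, ((Finset.range N).filter
        (fun i => List.ofFn (fun j : Fin k => α (i * k + j)) = List.ofFn f)).card
      = ∑ f : Fin k → Bool, ∑ i ∈ Finset.range N,
          if (List.ofFn fun j : Fin k => α (i * k + j)) = List.ofFn f then 1 else 0 := by
        apply Finset.sum_congr rfl
        intro f _
        rw [Finset.card_filter]
    _ = ∑ i ∈ Finset.range N, ∑ f : Fin k → Bool,
          if (List.ofFn fun j : Fin k => α (i * k + j)) = List.ofFn f then 1 else 0 :=
        Finset.sum_comm
    _ = ∑ i ∈ Finset.range N, 1 := Finset.sum_congr rfl (fun i _ => hswap i)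
    _ = N := by simp

end Seq

end Code


section Analysis
open Real Filter

lemma gibbs_log (M β γ : ℝ) (hM : 2 ≤ M) (h1 : 1/M < β) (h2 : β < 1)
    (hγ : γ = (1 - β)/(M - 1)) :
    β * Real.log β⁻¹ + (1 - β) * Real.log γ⁻¹ < Real.log M := by
  have hM0 : 0 < M := by linarith
  have hM1 : 0 < M - 1 := by linarith
  have hβ0 : 0 < β := lt_trans (by positivity) h1
  have hβ1 : 0 < 1 - β := by linarith
  have hγ0 : 0 < γ := by rw [hγ]; positivity
  have hMβ : (0 : ℝ) < M * β := by positivity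
  have hMγ : (0 : ℝ) < M * γ := by positivity
  have honeMβ : 1 < M * β := by
    have := (div_lt_iff₀ hM0).mp h1
    linarith [this]
  have hne : (M * β)⁻¹ ≠ 1 := by
    have hlt : (M * β)⁻¹ < 1 := inv_lt_one_of_one_lt₀ honeMβ
    exact ne_of_lt hlt
  have hb1 : β * Real.log ((M * β)⁻¹) < 1/M - β := by
    have h := Real.log_lt_sub_one_of_pos (inv_pos.mpr hMβ) hne
    have h' : β * Real.log ((M * β)⁻¹) < β * ((M * β)⁻¹ - 1) :=
      mul_lt_mul_of_pos_left h hβ0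
    have heq : β * ((M * β)⁻¹ - 1) = 1/M - β := by
      field_simp
    linarith
  have hb2 : (1 - β) * Real.log ((M * γ)⁻¹) ≤ (M - 1)/M - (1 - β) := by
    have h := Real.log_le_sub_one_of_pos (inv_pos.mpr hMγ)
    have h' : (1 - β) * Real.log ((M * γ)⁻¹) ≤ (1 - β) * ((M * γ)⁻¹ - 1) :=
      mul_le_mul_of_nonneg_left h (le_of_lt hβ1)
    have heq : (1 - β) * ((M * γ)⁻¹ - 1) = (M - 1)/M - (1 - β) := by
      rw [hγ]
      field_simp
    linarith
  have e1 : Real.log β⁻¹ = Real.log ((M * β)⁻¹) + Real.log M := by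
    rw [mul_inv, Real.log_mul (by positivity) (by positivity), Real.log_inv, Real.log_inv]
    ring
  have e2 : Real.log γ⁻¹ = Real.log ((M * γ)⁻¹) + Real.log M := by
    rw [mul_inv, Real.log_mul (by positivity) (by positivity), Real.log_inv, Real.log_inv]
    ring
  have hzero : 1/M - β + ((M - 1)/M - (1 - β)) = 0 := by
    field_simp
    ring
  calc β * Real.log β⁻¹ + (1 - β) * Real.log γ⁻¹
      = (β * Real.log ((M * β)⁻¹) + (1 - β) * Real.log ((M * γ)⁻¹))
        + (β + (1 - β)) * Real.log M := by rw [e1, e2]; ring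
    _ < (1/M - β + ((M - 1)/M - (1 - β))) + (β + (1 - β)) * Real.log M := by linarith
    _ = Real.log M := by rw [hzero]; ring_nf

lemma gibbs_logb (k : ℕ) (hk : 0 < k) (β γ : ℝ)
    (h1 : ((2:ℝ)^k)⁻¹ < β) (h2 : β < 1) (hγ : γ = (1 - β)/((2:ℝ)^k - 1)) :
    β * Real.logb 2 β⁻¹ + (1 - β) * Real.logb 2 γ⁻¹ < k := by
  have hM : (2:ℝ) ≤ 2^k := by
    calc (2:ℝ) = 2^1 := (pow_one 2).symm
      _ ≤ 2^k := pow_le_pow_right₀ (by norm_num) hk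
  have h1' : 1/(2:ℝ)^k < β := by rw [one_div]; exact h1
  have hmain := gibbs_log ((2:ℝ)^k) β γ hM h1' h2 hγ
  have hlog2 : (0:ℝ) < Real.log 2 := Real.log_pos (by norm_num)
  have hlogM : Real.log ((2:ℝ)^k) = k * Real.log 2 := by
    rw [Real.log_pow]
  rw [hlogM] at hmain
  have hrw : β * Real.logb 2 β⁻¹ + (1 - β) * Real.logb 2 γ⁻¹
      = (β * Real.log β⁻¹ + (1 - β) * Real.log γ⁻¹) / Real.log 2 := by
    unfold Real.logb
    ring
  rw [hrw, div_lt_iff₀ hlog2]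
  exact hmain

lemma exists_t (ε : ℝ) (hε : 0 < ε) :
    ∃ t : ℕ, 0 < t ∧ (2 * (cbits t : ℝ) + 4) ≤ t * ε := by
  obtain ⟨j₀, hj₀⟩ := exists_nat_ge (8 / ε)
  set j := j₀ + 1 with hj
  have hj1 : 1 ≤ j := by omega
  have hjε : 8 ≤ (j : ℝ) * ε := by
    have hj8 : 8 / ε ≤ (j : ℝ) := by
      have h1 : (j₀ : ℝ) ≤ j := by exact_mod_cast Nat.le_succ j₀
      linarith
    calc (8:ℝ) = (8/ε) * ε := by field_simp
      _ ≤ j * ε := mul_le_mul_of_nonneg_right hj8 (le_of_lt hε)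
  have hone : 1 ≤ 2^(2*j) := Nat.one_le_two_pow
  refine ⟨2^(2*j) - 1, by
    have h2 : 2 ≤ 2^(2*j) := by
      calc 2 = 2^1 := rfl
        _ ≤ 2^(2*j) := Nat.pow_le_pow_right (by norm_num) (by omega)
    omega, ?_⟩
  set t := 2^(2*j) - 1 with ht
  have ht1 : t + 1 = 2^(2*j) := by omega
  have hcb : cbits t = 2*j := by rw [cbits, ht1, Nat.clog_pow 2 _ one_lt_two]
  have htj : (j*j : ℕ) ≤ t := by
    have h1 : j < 2^j := Nat.lt_two_pow_self (n := j)
    have h2 : j*j < 2^j * 2^j := Nat.mul_lt_mul'' h1 h1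
    have h3 : 2^j * 2^j = 2^(2*j) := by rw [← pow_add]; congr 1; omega
    omega
  rw [hcb]
  have hstep : (4*(j:ℝ) + 4) ≤ ((j*j : ℕ) : ℝ) * ε := by
    rw [Nat.cast_mul]
    have hj1' : (1:ℝ) ≤ j := by exact_mod_cast hj1
    have h8 : (j:ℝ) * 8 ≤ (j:ℝ) * ((j:ℝ) * ε) := mul_le_mul_of_nonneg_left hjε (by positivity)
    nlinarith [h8]
  have hle : ((j*j : ℕ) : ℝ) ≤ (t : ℝ) := by exact_mod_cast htj
  calc 2 * ((2*j : ℕ) : ℝ) + 4 = 4*(j:ℝ) + 4 := by push_cast; ring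
    _ ≤ ((j*j:ℕ):ℝ) * ε := hstep
    _ ≤ t * ε := mul_le_mul_of_nonneg_right hle (le_of_lt hε)

lemma freq_multiple (g : ℕ → ℕ) (hmono : ∀ a b : ℕ, a ≤ b → g a ≤ g b)
    (t : ℕ) (ht : 0 < t) (c1 δ : ℝ) (hδ : 0 < δ) (hc1 : 0 ≤ c1)
    (hfreq : ∃ᶠ N in Filter.atTop, (c1 + δ) * N ≤ g N) (m : ℕ) :
    ∃ N, m ≤ N ∧ (c1 + δ/2) * ((N * t : ℕ) : ℝ) ≤ g (N * t) := by
  obtain ⟨C, hC⟩ := exists_nat_ge ((2/δ) * (c1 + δ))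
  obtain ⟨N₀, hN₀ge, hJ⟩ := Filter.frequently_atTop.mp hfreq (t * (max m C + 1))
  set N := N₀ / t + 1 with hN
  have hdiv : max m C + 1 ≤ N₀ / t := by
    rw [Nat.le_div_iff_mul_le ht]
    calc (max m C + 1) * t = t * (max m C + 1) := by ring
      _ ≤ N₀ := hN₀ge
  have hNm : m ≤ N := by omega
  have hNC : C ≤ N := by omega
  have hup : N * t ≤ N₀ + t := by
    rw [hN, Nat.succ_mul]
    exact Nat.add_le_add_right (Nat.div_mul_le_self _ _) t
  have hlow : N₀ ≤ N * t := by
    rw [hN]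
    exact le_of_lt ((Nat.div_lt_iff_lt_mul ht).mp (Nat.lt_succ_self _))
  refine ⟨N, hNm, ?_⟩
  have hJ2 : (c1 + δ) * N₀ ≤ (g (N * t) : ℝ) := by
    calc (c1 + δ) * N₀ ≤ (g N₀ : ℝ) := hJ
      _ ≤ (g (N * t) : ℝ) := by exact_mod_cast hmono _ _ hlow
  have hcast1 : ((N * t : ℕ) : ℝ) = (N : ℝ) * t := by push_cast; ring
  have hN₀r : ((N : ℝ) * t) - t ≤ (N₀ : ℝ) := by
    have : ((N * t : ℕ) : ℝ) ≤ (N₀ : ℝ) + t := by exact_mod_cast hup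
    rw [hcast1] at this
    linarith
  have hCr : (2/δ) * (c1 + δ) ≤ (N : ℝ) := by
    calc (2/δ) * (c1 + δ) ≤ (C : ℝ) := hC
      _ ≤ (N : ℝ) := by exact_mod_cast hNC
  have ht1 : (1 : ℝ) ≤ (t : ℝ) := by exact_mod_cast ht
  rw [hcast1]
  have hkey : (c1 + δ/2) * ((N:ℝ) * t) ≤ (c1 + δ) * ((N:ℝ)*t - t) := by
    have h1 : (c1 + δ) ≤ (δ/2) * (N : ℝ) := by
      have := mul_le_mul_of_nonneg_left hCr (le_of_lt (half_pos hδ))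
      calc (c1 + δ) = (δ/2) * ((2/δ) * (c1 + δ)) := by field_simp
        _ ≤ (δ/2) * N := mul_le_mul_of_nonneg_left hCr (by positivity)
    nlinarith [mul_le_mul_of_nonneg_right h1 (le_trans zero_le_one ht1)]
  calc (c1 + δ/2) * ((N:ℝ) * t) ≤ (c1 + δ) * ((N:ℝ)*t - t) := hkey
    _ ≤ (c1 + δ) * N₀ := by
        apply mul_le_mul_of_nonneg_left hN₀r (by linarith)
    _ ≤ (g (N*t) : ℝ) := hJ2

end Analysis

section Dev

open Filter Real

lemma exists_over (α : ℕ → Bool) (k : ℕ) (hk : 0 < k) (r₀ : List Bool) (hr₀ : r₀.length = k)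
    (h : ¬ Filter.Tendsto (fun N => (alignedCount α k r₀ N : ℝ) / (N : ℝ)) Filter.atTop
        (nhds ((2 : ℝ)⁻¹ ^ k))) :
    ∃ (r : List Bool) (δ : ℝ), r.length = k ∧ 0 < δ ∧
      ∃ᶠ N in Filter.atTop, (((2:ℝ)^k)⁻¹ + δ) * N ≤ alignedCount α k r N := by
  classical
  have ha : (2 : ℝ)⁻¹ ^ k = ((2:ℝ)^k)⁻¹ := by rw [inv_pow]
  set a : ℝ := ((2:ℝ)^k)⁻¹ with haa
  rw [Metric.tendsto_atTop] at h
  push_neg at h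
  obtain ⟨ε, hε, hfreq0⟩ := h
  have hfreq : ∃ᶠ N in atTop, ε ≤ |(alignedCount α k r₀ N : ℝ) / N - a| := by
    rw [frequently_atTop]
    intro m
    obtain ⟨n, hn, hd⟩ := hfreq0 m
    refine ⟨n, hn, ?_⟩
    rw [Real.dist_eq, ha] at hd
    exact hd
  have hsplit : (∃ᶠ N in atTop, ε ≤ (alignedCount α k r₀ N : ℝ) / N - a) ∨
      (∃ᶠ N in atTop, ε ≤ -((alignedCount α k r₀ N : ℝ) / N - a)) := by
    rw [← frequently_or_distrib]
    exact hfreq.mono (fun N hN => le_abs.mp hN)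
  have hM2 : (2:ℝ) ≤ 2^k := by
    calc (2:ℝ) = 2^1 := (pow_one 2).symm
      _ ≤ 2^k := pow_le_pow_right₀ (by norm_num) hk
  rcases hsplit with hover | hunder
  · refine ⟨r₀, ε, hr₀, hε, ?_⟩
    have hh := hover.and_eventually (eventually_ge_atTop 1)
    apply hh.mono
    rintro N ⟨hN, hN1⟩
    have hN0 : (0:ℝ) < N := by exact_mod_cast hN1
    have hdiv : a + ε ≤ (alignedCount α k r₀ N : ℝ) / N := by linarith
    calc (((2:ℝ)^k)⁻¹ + ε) * N = (a + ε) * N := by rw [haa]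
      _ ≤ ((alignedCount α k r₀ N : ℝ)/N) * N :=
          mul_le_mul_of_nonneg_right hdiv (le_of_lt hN0)
      _ = (alignedCount α k r₀ N : ℝ) := by field_simp
  · set δ : ℝ := ε / ((2:ℝ)^k - 1) with hδdef
    have hδ : 0 < δ := by
      apply div_pos hε
      linarith
    have hδε : ((2:ℝ)^k - 1) * δ = ε := by
      rw [hδdef, mul_div_cancel₀ _ (by linarith : ((2:ℝ)^k - 1) ≠ 0)]
    have hMa : (2:ℝ)^k * a = 1 := by
      rw [haa]
      field_simp
    set f₀ : Fin k → Bool := fun i => r₀.get ⟨i, by rw [hr₀]; exact i.2⟩ with hf₀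
    have hof₀ : List.ofFn f₀ = r₀ := by
      apply List.ext_getElem
      · simp [hr₀]
      · intro i h1 h2
        simp [hf₀]
    have hcard2 : 2 ≤ 2^k := by
      calc 2 = 2^1 := rfl
        _ ≤ 2^k := Nat.pow_le_pow_right (by norm_num) hk
    have hfr2 : ∃ᶠ N in atTop, ∃ f : Fin k → Bool,
        (a + δ) * N ≤ alignedCount α k (List.ofFn f) N := by
      have hh := hunder.and_eventually (eventually_ge_atTop 1)
      apply hh.mono
      rintro N ⟨hN, hN1⟩
      have hN0 : (0:ℝ) < N := by exact_mod_cast hN1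
      have hr₀count : (alignedCount α k r₀ N : ℝ) ≤ (a - ε) * N := by
        have hdiv : (alignedCount α k r₀ N : ℝ) / N ≤ a - ε := by linarith
        calc (alignedCount α k r₀ N : ℝ) = ((alignedCount α k r₀ N : ℝ)/N) * N := by
              field_simp
          _ ≤ (a - ε) * N := mul_le_mul_of_nonneg_right hdiv (le_of_lt hN0)
      by_contra hcon
      push_neg at hcon
      have hsum : (∑ f : Fin k → Bool, (alignedCount α k (List.ofFn f) N : ℝ)) = N := by
        exact_mod_cast congrArg (Nat.cast : ℕ → ℝ) (sum_alignedCount α k hk N)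
      have hsplitsum := Finset.add_sum_erase Finset.univ
        (fun f : Fin k → Bool => (alignedCount α k (List.ofFn f) N : ℝ)) (Finset.mem_univ f₀)
      have hcarderase : ((Finset.univ : Finset (Fin k → Bool)).erase f₀).card = 2^k - 1 := by
        rw [Finset.card_erase_of_mem (Finset.mem_univ _)]
        simp [Finset.card_univ]
      have hne : ((Finset.univ : Finset (Fin k → Bool)).erase f₀).Nonempty := by
        rw [← Finset.card_pos, hcarderase]
        omega
      have hlt : ∑ f ∈ (Finset.univ : Finset (Fin k → Bool)).erase f₀,
          (alignedCount α k (List.ofFn f) N : ℝ)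
          < ∑ _f ∈ (Finset.univ : Finset (Fin k → Bool)).erase f₀, (a + δ) * N := by
        apply Finset.sum_lt_sum_of_nonempty hne
        intro f _
        exact hcon f
      rw [Finset.sum_const, nsmul_eq_mul, hcarderase] at hlt
      have hcaster : ((2^k - 1 : ℕ) : ℝ) = (2:ℝ)^k - 1 := by
        rw [Nat.cast_sub (by omega : 1 ≤ 2^k)]
        push_cast
        ring
      rw [hcaster] at hlt
      have h1 : (alignedCount α k (List.ofFn f₀) N : ℝ) ≤ (a - ε) * N := by
        rw [hof₀]
        exact hr₀count
      have htot : (N : ℝ) < (a - ε) * N + ((2:ℝ)^k - 1) * ((a + δ) * N) := by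
        calc (N : ℝ) = ∑ f : Fin k → Bool, (alignedCount α k (List.ofFn f) N : ℝ) :=
              hsum.symm
          _ = (alignedCount α k (List.ofFn f₀) N : ℝ) +
              ∑ f ∈ (Finset.univ : Finset (Fin k → Bool)).erase f₀,
                (alignedCount α k (List.ofFn f) N : ℝ) := hsplitsum.symm
          _ < (a - ε) * N + ((2:ℝ)^k - 1) * ((a + δ) * N) :=
              add_lt_add_of_le_of_lt h1 hlt
      have hcollect : (a - ε) * N + ((2:ℝ)^k - 1) * ((a + δ) * N)
          = ((a - ε) + ((2:ℝ)^k - 1) * (a + δ)) * N := by ring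
      have hcoef : (a - ε) + ((2:ℝ)^k - 1) * (a + δ) = 1 := by nlinarith [hδε, hMa]
      rw [hcollect, hcoef, one_mul] at htot
      exact absurd htot (lt_irrefl _)
    have hexists : ∃ f : Fin k → Bool, ∃ᶠ N in atTop,
        (a + δ) * N ≤ alignedCount α k (List.ofFn f) N := by
      by_contra hc
      push_neg at hc
      have hev : ∀ f : Fin k → Bool, ∀ᶠ N in atTop,
          ¬ ((a + δ) * N ≤ alignedCount α k (List.ofFn f) N) :=
        fun f => (hc f).mono (fun N hN => not_le.mpr hN)
      have hall := Filter.eventually_all.mpr hev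
      obtain ⟨N, ⟨f, hQ⟩, hnall⟩ := (hfr2.and_eventually hall).exists
      exact hnall f hQ
    obtain ⟨f, hf⟩ := hexists
    exact ⟨List.ofFn f, δ, by simp, hδ, hf⟩

end Dev

end NNC

open NNC
set_option maxHeartbeats 2000000

/-- A non-normal sequence is compressible by a finite automaton: there are a
description mode `R` and a rational `a/b < 1` with `K_R(α↾n) ≤ (a/b)·n`
for infinitely many `n`. -/
theorem compressible_of_not_normal (α : ℕ → Bool) (hα : ¬ IsNormal α) :
    ∃ R : List Bool → List Bool → Prop, IsDescriptionMode R ∧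
      ∃ a b : ℕ, a < b ∧
        ∃ᶠ n in Filter.atTop, (b : ℕ∞) * autK R (prefixOf α n) ≤ (a * n : ℕ∞) := by
  classical
  unfold IsNormal at hα
  push_neg at hα
  obtain ⟨k, hk, r₀, hr₀, hnt⟩ := hα
  obtain ⟨r, δ₀, hr, hδ₀, hfreq⟩ := exists_over α k hk r₀ hr₀ hnt
  have hM2 : (2:ℝ) ≤ (2:ℝ)^k := by
    calc (2:ℝ) = 2^1 := (pow_one 2).symm
      _ ≤ 2^k := pow_le_pow_right₀ (by norm_num) hk
  have hMpos : (0:ℝ) < (2:ℝ)^k := by positivity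
  have hMinv : (0:ℝ) < ((2:ℝ)^k)⁻¹ := by positivity
  -- the frequency bound cannot exceed 1
  have hle1 : ((2:ℝ)^k)⁻¹ + δ₀ ≤ 1 := by
    obtain ⟨N, hprop, hN1⟩ :=
      (hfreq.and_eventually (Filter.eventually_ge_atTop 1)).exists
    have hN0 : (0:ℝ) < N := by exact_mod_cast hN1
    have hcle : (alignedCount α k r N : ℝ) ≤ N := by
      exact_mod_cast alignedCount_le α k r N
    nlinarith
  -- parameters
  have hβ0 : (0:ℝ) < ((2:ℝ)^k)⁻¹ + δ₀/2 := by positivity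
  have hβM : ((2:ℝ)^k)⁻¹ < ((2:ℝ)^k)⁻¹ + δ₀/2 := by linarith
  have hβ1 : ((2:ℝ)^k)⁻¹ + δ₀/2 < 1 := by linarith
  have hγ0 : (0:ℝ) < (1 - (((2:ℝ)^k)⁻¹ + δ₀/2))/((2:ℝ)^k - 1) := by
    apply div_pos <;> linarith
  have hγ1 : (1 - (((2:ℝ)^k)⁻¹ + δ₀/2))/((2:ℝ)^k - 1) ≤ 1 := by
    rw [div_le_one (by linarith)]
    linarith
  have hsumβγ : (((2:ℝ)^k)⁻¹ + δ₀/2) + ((2:ℝ)^k - 1) *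
      ((1 - (((2:ℝ)^k)⁻¹ + δ₀/2))/((2:ℝ)^k - 1)) = 1 := by
    rw [mul_div_cancel₀ _ (by linarith : ((2:ℝ)^k - 1) ≠ 0)]
    ring
  have hgibbs := gibbs_logb k hk (((2:ℝ)^k)⁻¹ + δ₀/2)
    ((1 - (((2:ℝ)^k)⁻¹ + δ₀/2))/((2:ℝ)^k - 1)) hβM hβ1 rfl
  set L₁ : ℝ := Real.logb 2 ((((2:ℝ)^k)⁻¹ + δ₀/2))⁻¹ with hL₁def
  set L₂ : ℝ := Real.logb 2 ((1 - (((2:ℝ)^k)⁻¹ + δ₀/2))/((2:ℝ)^k - 1))⁻¹ with hL₂def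
  set βv : ℝ := ((2:ℝ)^k)⁻¹ + δ₀/2 with hβv
  have hε₀pos : (0:ℝ) < k - (βv * L₁ + (1 - βv) * L₂) := by linarith [hgibbs]
  have hL12 : L₁ ≤ L₂ := by
    have hγβ : (1 - βv)/((2:ℝ)^k - 1) ≤ βv := by
      rw [div_le_iff₀ (by linarith : (0:ℝ) < (2:ℝ)^k - 1)]
      have h1 : 1 < βv * (2:ℝ)^k := by
        have := (div_lt_iff₀ hMpos).mp (by rw [div_eq_inv_mul, mul_one]; exact hβM)
        calc (1:ℝ) = ((2:ℝ)^k)⁻¹ * (2:ℝ)^k := by field_simp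
          _ < βv * (2:ℝ)^k := by
              apply mul_lt_mul_of_pos_right hβM hMpos
      nlinarith
    rw [hL₁def, hL₂def]
    apply (Real.logb_le_logb one_lt_two (by positivity) (by positivity)).mpr
    exact inv_anti₀ hγ0 hγβ
  obtain ⟨t, ht, htbound⟩ := exists_t (k - (βv * L₁ + (1 - βv) * L₂)) hε₀pos
  have hs0 : 0 < t * k := Nat.mul_pos ht hk
  have hencpf := enc_pf k t r
  have henclen : ∀ V : Fin (t*k) → Bool, 0 < (enc k t r V).length := by
    intro V
    rw [enc_length]
    have := cbits_pos t ht
    omega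
  have hencle : ∀ V : Fin (t*k) → Bool,
      (enc k t r V).length ≤ cbits t + t * k := by
    intro V
    rw [enc_length]
    have := wbits_le_s k t r (cnt k t r V)
    omega
  refine ⟨(G (t*k) (cbits t + t*k) (enc k t r) hs0).Rel,
    ⟨⟨G (t*k) (cbits t + t*k) (enc k t r) hs0, fun u v => Iff.rfl⟩,
      Fintype.card (St (t*k) (cbits t + t*k)) * Fintype.card (St (t*k) (cbits t + t*k)),
      fun p => rel_bounded (t*k) (cbits t + t*k) (enc k t r) hs0 p⟩,
    t*k - 1, t*k, by omega, ?_⟩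
  rw [Filter.frequently_atTop]
  intro m
  obtain ⟨N, hNm, hNcount⟩ := freq_multiple (alignedCount α k r)
    (fun a b h => alignedCount_mono α k r h) t ht (((2:ℝ)^k)⁻¹) δ₀ hδ₀
    (le_of_lt hMinv) hfreq (max m 1)
  have hN1 : 1 ≤ N := le_trans (le_max_right m 1) hNm
  refine ⟨N * (t*k), ?_, ?_⟩
  · calc m ≤ max m 1 := le_max_left _ _
      _ ≤ N := hNm
      _ ≤ N * (t*k) := Nat.le_mul_of_pos_right N hs0
  -- description and its properties
  have hxeq : ((((List.range N).map (fun i => sb α k t i)).map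
      (fun W => List.ofFn W)).flatten) = prefixOf α (N * (t * k)) := flatten_blocks α k t N
  have hRel : (G (t*k) (cbits t + t*k) (enc k t r) hs0).Rel
      ((((List.range N).map (fun i => sb α k t i)).map (enc k t r)).flatten)
      (prefixOf α (N * (t * k))) := by
    rw [← hxeq]
    exact ⟨_, _, read_list (t*k) (cbits t + t*k) (enc k t r) hs0 hencpf henclen hencle _⟩
  have hKle : autK (G (t*k) (cbits t + t*k) (enc k t r) hs0).Rel (prefixOf α (N * (t*k)))
      ≤ ((((List.range N).map (fun i => sb α k t i)).map (enc k t r)).flatten.length : ℕ∞) := by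
    apply sInf_le
    exact ⟨_, hRel, rfl⟩
  -- length bound
  have hdesc := desc_length α k t r N
  have hjle : ∀ i, cnt k t r (sb α k t i) ≤ t := fun i => cnt_le k t r _
  have hJdef := sum_cnt α k t r N
  have hJle : alignedCount α k r (N*t) ≤ N*t := alignedCount_le α k r (N*t)
  have hcompl : (∑ i ∈ Finset.range N, (t - cnt k t r (sb α k t i)))
      = N*t - alignedCount α k r (N*t) := by
    have h1 : ∑ i ∈ Finset.range N, ((t - cnt k t r (sb α k t i)) + cnt k t r (sb α k t i))
        = ∑ _i ∈ Finset.range N, t :=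
      Finset.sum_congr rfl (fun i _ => by have := hjle i; omega)
    rw [Finset.sum_add_distrib, hJdef] at h1
    rw [Finset.sum_const, Finset.card_range, smul_eq_mul] at h1
    omega
  have hwb : ∀ i, ((wbits k t r (cnt k t r (sb α k t i)) : ℕ) : ℝ) ≤
      1 + (cnt k t r (sb α k t i) : ℝ) * L₁ + ((t - cnt k t r (sb α k t i) : ℕ) : ℝ) * L₂ :=
    fun i => wbits_le k t r hr hk _ _ hβ0 (le_of_lt hβ1) hγ0 hγ1 hsumβγ _
  have hlenreal : ((((List.range N).map (fun i => sb α k t i)).map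
      (enc k t r)).flatten.length : ℝ) ≤ (N : ℝ) * (t*k) - N := by
    have hcast : ((((List.range N).map (fun i => sb α k t i)).map
        (enc k t r)).flatten.length : ℝ)
        = ∑ i ∈ Finset.range N, ((cbits t : ℝ) + (wbits k t r (cnt k t r (sb α k t i)) : ℝ)) := by
      rw [hdesc]
      push_cast
      rfl
    rw [hcast]
    have hstep1 : ∑ i ∈ Finset.range N, ((cbits t : ℝ) + (wbits k t r (cnt k t r (sb α k t i)) : ℝ))
        ≤ ∑ i ∈ Finset.range N, ((cbits t : ℝ) + 1 + (cnt k t r (sb α k t i) : ℝ) * L₁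
            + ((t - cnt k t r (sb α k t i) : ℕ) : ℝ) * L₂) := by
      apply Finset.sum_le_sum
      intro i _
      have := hwb i
      linarith
    have hsum1 : ∑ i ∈ Finset.range N, ((cbits t : ℝ) + 1 + (cnt k t r (sb α k t i) : ℝ) * L₁
            + ((t - cnt k t r (sb α k t i) : ℕ) : ℝ) * L₂)
        = N * ((cbits t : ℝ) + 1) + (alignedCount α k r (N*t) : ℝ) * L₁
            + ((N*t - alignedCount α k r (N*t) : ℕ) : ℝ) * L₂ := by
      rw [Finset.sum_add_distrib, Finset.sum_add_distrib, ← Finset.sum_mul, ← Finset.sum_mul,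
        Finset.sum_const, Finset.card_range, nsmul_eq_mul, ← Nat.cast_sum, ← Nat.cast_sum,
        hJdef, hcompl]
    have hJr : (((2:ℝ)^k)⁻¹ + δ₀/2) * ((N*t : ℕ) : ℝ) ≤ (alignedCount α k r (N*t) : ℝ) :=
      hNcount
    have hcastNt : ((N*t : ℕ) : ℝ) = (N:ℝ) * t := by push_cast; ring
    have hcastsub : ((N*t - alignedCount α k r (N*t) : ℕ) : ℝ)
        = (N:ℝ)*t - (alignedCount α k r (N*t) : ℝ) := by
      rw [Nat.cast_sub hJle]
      push_cast
      ring
    have hL2J : (alignedCount α k r (N*t) : ℝ) * L₁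
          + ((N*t - alignedCount α k r (N*t) : ℕ) : ℝ) * L₂
        ≤ ((N:ℝ)*t) * (βv * L₁ + (1 - βv) * L₂) := by
      rw [hcastsub]
      have hprod : (L₂ - L₁) * (βv * ((N:ℝ)*t)) ≤ (L₂ - L₁) * (alignedCount α k r (N*t) : ℝ) := by
        apply mul_le_mul_of_nonneg_left _ (by linarith)
        rw [← hcastNt]
        exact hJr
      nlinarith [hprod]
    have hεbound : (N:ℝ) * (2 * (cbits t : ℝ) + 4)
        ≤ ((N:ℝ)*t) * (k - (βv * L₁ + (1 - βv) * L₂)) := by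
      have := mul_le_mul_of_nonneg_left htbound (by positivity : (0:ℝ) ≤ (N:ℝ))
      calc (N:ℝ) * (2 * (cbits t : ℝ) + 4) ≤ (N:ℝ) * ((t:ℝ) * (k - (βv * L₁ + (1 - βv) * L₂))) := this
        _ = ((N:ℝ)*t) * (k - (βv * L₁ + (1 - βv) * L₂)) := by ring
    calc ∑ i ∈ Finset.range N, ((cbits t : ℝ) + (wbits k t r (cnt k t r (sb α k t i)) : ℝ))
        ≤ N * ((cbits t : ℝ) + 1) + (alignedCount α k r (N*t) : ℝ) * L₁
            + ((N*t - alignedCount α k r (N*t) : ℕ) : ℝ) * L₂ := by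
          rw [← hsum1]; exact hstep1
      _ ≤ N * ((cbits t : ℝ) + 1) + ((N:ℝ)*t) * (βv * L₁ + (1 - βv) * L₂) := by linarith
      _ ≤ (N : ℝ) * (t*k) - N := by nlinarith [hεbound]
  have hlenNat : (((List.range N).map (fun i => sb α k t i)).map
      (enc k t r)).flatten.length ≤ N * (t*k - 1) := by
    have hcast2 : ((N * (t*k - 1) : ℕ) : ℝ) = (N:ℝ) * (t*k) - N := by
      rw [Nat.cast_mul, Nat.cast_sub hs0]
      push_cast
      ring
    rw [← Nat.cast_le (α := ℝ), hcast2]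
    exact hlenreal
  have hKle2 : autK (G (t*k) (cbits t + t*k) (enc k t r) hs0).Rel (prefixOf α (N * (t*k)))
      ≤ ((N * (t*k - 1) : ℕ) : ℕ∞) := by
    refine le_trans hKle ?_
    exact_mod_cast Nat.cast_le.mpr hlenNat
  calc ((t*k : ℕ) : ℕ∞) * autK (G (t*k) (cbits t + t*k) (enc k t r) hs0).Rel
        (prefixOf α (N * (t*k)))
      ≤ ((t*k : ℕ) : ℕ∞) * ((N * (t*k - 1) : ℕ) : ℕ∞) := mul_le_mul_right hKle2 _
    _ = (((t*k) * (N * (t*k - 1)) : ℕ) : ℕ∞) := (Nat.cast_mul _ _).symm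
    _ = (((t*k - 1) * (N * (t*k)) : ℕ) : ℕ∞) := by
        have hNatEq : (t*k) * (N * (t*k - 1)) = (t*k - 1) * (N * (t*k)) := by
          rw [mul_left_comm, mul_comm (t*k) (t*k - 1), mul_left_comm]
        rw [hNatEq]
    _ = ((t*k - 1 : ℕ) : ℕ∞) * ((N * (t*k) : ℕ) : ℕ∞) := Nat.cast_mul _ _
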